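/- Let a, b, c, d be positive reals. Define c3333 = (((1/a)+(1/b))/2)^{-1}, and c1111 = c3333 · ((( (a−2c)/a + (b−2d)/b )/2))^2 + ( (4(a−c)c/a + 4(b−d)d/b )/2 ). Then the condition ε = 0, i.e. c1111 = c3333, is equivalent to (c − d)(c − d + b − a) = 0. -/
import Mathlib


/-- For the Backus average of two equally weighted isotropic layers `(a, c)` and `(b, d)`,
the Thomsen-ε condition `c1111 = c3333` is equivalent to `(c − d)(c − d + b − a) = 0`. -/
theorem epsilon_zero_iff (a b c d : ℝ) (ha : 0 < a) (hb : 0 < b) (hc : 0 < c) (hd : 0 < d) :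
    let c3333 : ℝ := ((1 / a + 1 / b) / 2)⁻¹
    let c1111 : ℝ := c3333 * ((((a - 2 * c) / a + (b - 2 * d) / b) / 2)) ^ 2
      + (4 * (a - c) * c / a + 4 * (b - d) * d / b) / 2
    (c1111 = c3333 ↔ (c - d) * (c - d + b - a) = 0) := by
  intro c3333 c1111
  have ha' := ha.ne'
  have hb' := hb.ne'
  have hab : a + b ≠ 0 := by positivity
  have key : c1111 - c3333 = -2 * ((c - d) * (c - d + b - a)) / (a + b) := by
    show ((1 / a + 1 / b) / 2)⁻¹ * ((((a - 2 * c) / a + (b - 2 * d) / b) / 2)) ^ 2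
      + (4 * (a - c) * c / a + 4 * (b - d) * d / b) / 2 - ((1 / a + 1 / b) / 2)⁻¹ = _
    field_simp
    ring
  constructor
  · intro h
    have : -2 * ((c - d) * (c - d + b - a)) / (a + b) = 0 := by rw [← key, h]; ring
    have := (div_eq_zero_iff.mp this).resolve_right hab
    linarith
  · intro h
    have : c1111 - c3333 = 0 := by rw [key, h]; ring
    linarith
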